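/- The image of the polynomial p(x,y) = [x,y]² = (xy − yx)², evaluated on the real quaternion algebra ℍ, is exactly the set {r·1 : r ∈ ℝ, r ≤ 0} of nonpositive scalar quaternions: every value (xy−yx)² is a nonpositive real scalar, and every nonpositive real scalar is attained. -/

import Mathlib

open Quaternion

/-- The image of `p(x,y) = [x,y]²` on the real quaternions is exactly the set
of nonpositive scalar quaternions. -/
theorem image_commutator_sq_quaternion :
    {q : ℍ[ℝ] | ∃ x y : ℍ[ℝ], q = (x * y - y * x) ^ 2} =
      {q : ℍ[ℝ] | ∃ r : ℝ, r ≤ 0 ∧ q = (r : ℍ[ℝ])} := by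
  ext q
  simp only [Set.mem_setOf_eq]
  constructor
  · rintro ⟨x, y, rfl⟩
    set c := x * y - y * x with hc
    have hre : c.re = 0 := by
      simp [hc, Quaternion.re_sub, Quaternion.re_mul]; ring
    refine ⟨-(c.imI ^ 2 + c.imJ ^ 2 + c.imK ^ 2),
      neg_nonpos.mpr (by positivity), ?_⟩
    ext <;>
      simp [pow_two, Quaternion.re_mul, Quaternion.imI_mul, Quaternion.imJ_mul,
        Quaternion.imK_mul, hre] <;> ring
  · rintro ⟨r, hr, rfl⟩
    refine ⟨⟨0, 1, 0, 0⟩, ⟨0, 0, Real.sqrt (-r) / 2, 0⟩, ?_⟩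
    have hs : Real.sqrt (-r) ^ 2 = -r := Real.sq_sqrt (by linarith)
    ext <;>
      simp [pow_two, Quaternion.re_mul, Quaternion.imI_mul, Quaternion.imJ_mul,
        Quaternion.imK_mul] <;> repeat (first | erw [Quaternion.re_mul] | erw [Quaternion.imI_mul] | erw [Quaternion.imJ_mul] | erw [Quaternion.imK_mul])
    all_goals norm_num
    all_goals nlinarith [hs]
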